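/- arXiv:1311.1687 — 7 statements merged into one kernel-verified Lean document; each statement's English description precedes it below -/
import Mathlib

section
/- For all natural numbers m ≥ 1, the double sum over r from 0 to m and s from 0 to m of ( binom(r+s, r) · binom(2m−r−s, m−r) )^2 equals binom(4m+1, 2m). -/
/-!
Let `F = ∑ C(r + s, r)² X^r Y^s`, so that the sum is the coefficient of `X^m Y^m` in `F²`.
Formally `F = disc^(-1/2)` with `disc = (1 - X - Y)² - 4XY`, and indeed Pascal's rule and
absorption show that `F` satisfies `2 disc ∂ₓF + (∂ₓ disc) F = 0`, hence `∂ₓ(disc F²) = 0`.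
At `X = 0` we have `disc = (1 - Y)²` and `F = (1 - Y)⁻¹`, so `disc F² = 1`. On the other hand
a four-fold Pascal identity gives `disc · ∑ C(2a + 2b + 2, 2a + 1) X^a Y^b = 2`, so the
coefficient of `X^m Y^m` in `F²` is `C(4m + 2, 2m + 1) / 2 = C(4m + 1, 2m)`.
-/

open PowerSeries

namespace BinomialSquares

/-- The binomial coefficient extended by zero outside `0 ≤ k ≤ n`, so that shifted indices need no
case analysis: absorption holds for all integers `n, k`, Pascal's rule for all `n ≥ 0`. -/
def zchoose (n k : ℤ) : ℤ := if 0 ≤ k ∧ k ≤ n then (n.toNat.choose k.toNat : ℤ) else 0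

@[simp] lemma zchoose_natCast (n k : ℕ) : zchoose n k = n.choose k := by
  unfold zchoose
  split_ifs with h
  · simp
  · rw [Nat.choose_eq_zero_of_lt (by omega), Nat.cast_zero]

lemma zchoose_of_lt_zero {n k : ℤ} (hk : k < 0) : zchoose n k = 0 := by
  simp [zchoose, hk.not_ge]

lemma zchoose_of_lt {n k : ℤ} (hk : n < k) : zchoose n k = 0 := by
  unfold zchoose
  rw [if_neg]
  omega

lemma zchoose_succ_succ {n : ℤ} (hn : 0 ≤ n) (k : ℤ) :
    zchoose (n + 1) (k + 1) = zchoose n k + zchoose n (k + 1) := by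
  lift n to ℕ using hn
  rcases lt_trichotomy k (-1) with hk | rfl | hk
  · rw [zchoose_of_lt_zero (by omega), zchoose_of_lt_zero (by omega),
      zchoose_of_lt_zero (by omega), add_zero]
  · rw [neg_add_cancel, zchoose_of_lt_zero (k := -1) (by norm_num), zero_add, ← Nat.cast_zero,
      ← Nat.cast_succ, zchoose_natCast, zchoose_natCast, Nat.choose_zero_right,
      Nat.choose_zero_right]
  · lift k to ℕ using (by omega)
    rw [← Nat.cast_succ, ← Nat.cast_succ]
    simp only [zchoose_natCast, Nat.choose_succ_succ, Nat.cast_add]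

lemma succ_mul_zchoose_succ (n k : ℤ) :
    (k + 1) * zchoose n (k + 1) = (n - k) * zchoose n k := by
  rcases lt_or_ge n k with hnk | hkn
  · rw [zchoose_of_lt hnk, zchoose_of_lt (by omega), mul_zero, mul_zero]
  rcases lt_trichotomy k (-1) with hk | rfl | hk
  · rw [zchoose_of_lt_zero (by omega), zchoose_of_lt_zero (by omega), mul_zero, mul_zero]
  · rw [neg_add_cancel, zero_mul, zchoose_of_lt_zero (by norm_num), mul_zero]
  · lift k to ℕ using (by omega)
    lift n to ℕ using (by omega)
    rw [← Nat.cast_succ, zchoose_natCast, zchoose_natCast, ← Nat.cast_sub (by omega)]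
    exact_mod_cast (by linarith [Nat.choose_succ_right_eq n k] :
      (k + 1) * n.choose (k + 1) = (n - k) * n.choose k)

lemma zchoose_add_two {n : ℤ} (hn : 0 ≤ n) (k : ℤ) :
    zchoose (n + 2) k = zchoose n (k - 2) + 2 * zchoose n (k - 1) + zchoose n k := by
  have h₁ := zchoose_succ_succ (by omega : 0 ≤ n + 1) (k - 1)
  have h₂ := zchoose_succ_succ hn (k - 2)
  have h₃ := zchoose_succ_succ hn (k - 1)
  rw [sub_add_cancel] at h₁ h₃
  rw [show k - 2 + 1 = k - 1 by ring] at h₂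
  rw [show n + 2 = n + 1 + 1 by ring]
  linear_combination h₁ + h₂ + h₃

/-- The coefficient identity behind `(1 + t)⁴ = 2t²(1 + t)² + 2(1 + t)² + 2t² - t⁴ - 1`. -/
lemma zchoose_add_four {n : ℤ} (hn : 0 ≤ n) (k : ℤ) :
    zchoose (n + 4) k = 2 * zchoose (n + 2) (k - 2) + 2 * zchoose (n + 2) k
      + 2 * zchoose n (k - 2) - zchoose n (k - 4) - zchoose n k := by
  have h₁ := zchoose_add_two (by omega : 0 ≤ n + 2) k
  have h₂ := zchoose_add_two hn (k - 2)
  have h₃ := zchoose_add_two hn (k - 1)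
  have h₄ := zchoose_add_two hn k
  rw [show n + 2 + 2 = n + 4 by ring] at h₁
  rw [show k - 2 - 2 = k - 4 by ring, show k - 2 - 1 = k - 3 by ring] at h₂
  rw [show k - 1 - 2 = k - 3 by ring, show k - 1 - 1 = k - 2 by ring] at h₃
  linear_combination h₁ - h₂ + 2 * h₃ - h₄

def binomSq (r s : ℤ) : ℤ := zchoose (r + s) r ^ 2

lemma binomSq_natCast (r s : ℕ) : binomSq r s = ((r + s).choose r : ℤ) ^ 2 := by
  rw [binomSq, ← Nat.cast_add, zchoose_natCast]

lemma binomSq_recurrence {a b : ℤ} (ha : 0 ≤ a) (hb : 0 ≤ b) :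
    (a + 1) * binomSq (a + 1) b - 2 * a * binomSq a b - 2 * (a + 1) * binomSq (a + 1) (b - 1)
      - 2 * a * binomSq a (b - 1) + (a - 1) * binomSq (a - 1) b
      + (a + 1) * binomSq (a + 1) (b - 2)
      = binomSq a b - binomSq (a - 1) b + binomSq a (b - 1) := by
  rcases (show a + b = 0 ∨ 1 ≤ a + b by omega) with hab | hab
  · obtain ⟨rfl, rfl⟩ : a = 0 ∧ b = 0 := by omega
    norm_num [binomSq, zchoose]
  -- All six binomials lie in rows `n, n + 1, n + 2` near column `a`; Pascal's rule writes them
  -- through `p, q, r` in row `n`, and absorption relates `p, q, r` to each other.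
  set n := a + b - 1
  set p := zchoose n (a - 1)
  set q := zchoose n a
  set r := zchoose n (a + 1)
  have hq : zchoose (n + 1) a = p + q := by
    simpa using zchoose_succ_succ (by omega : 0 ≤ n) (a - 1)
  have hr : zchoose (n + 1) (a + 1) = q + r := zchoose_succ_succ (by omega) a
  have hs : zchoose (n + 2) (a + 1) = p + 2 * q + r := by
    have := zchoose_succ_succ (by omega : 0 ≤ n + 1) a
    rw [show n + 1 + 1 = n + 2 by ring, hq, hr] at this
    linear_combination this
  have hpq : a * q = b * p := by
    simpa [show n - (a - 1) = b by omega] using succ_mul_zchoose_succ n (a - 1)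
  have hqr : (a + 1) * r = (b - 1) * q := by
    rw [← show n - a = b - 1 by omega]
    exact succ_mul_zchoose_succ n a
  simp only [binomSq]
  rw [show a + 1 + b = n + 2 by omega, show a + b = n + 1 by omega,
    show a + 1 + (b - 1) = n + 1 by omega, show a + (b - 1) = n by omega,
    show a - 1 + b = n by omega, show a + 1 + (b - 2) = n by omega, hq, hr, hs]
  linear_combination (-2 * q) * hpq + 2 * p * hqr

def oddBinom (a b : ℤ) : ℤ := zchoose (2 * a + 2 * b + 2) (2 * a + 1)

lemma oddBinom_recurrence {a b : ℤ} (ha : 0 ≤ a) (hb : 0 ≤ b) :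
    oddBinom a b - 2 * oddBinom (a - 1) b - 2 * oddBinom a (b - 1) - 2 * oddBinom (a - 1) (b - 1)
      + oddBinom (a - 2) b + oddBinom a (b - 2) = if a = 0 ∧ b = 0 then 2 else 0 := by
  split_ifs with hab
  · obtain ⟨rfl, rfl⟩ := hab
    norm_num [oddBinom, zchoose]
  · have := zchoose_add_four (by omega : 0 ≤ 2 * a + 2 * b - 2) (2 * a + 1)
    simp only [oddBinom]
    ring_nf at this ⊢
    linear_combination this

lemma oddBinom_natCast_self (m : ℕ) : oddBinom m m = 2 * (4 * m + 1).choose (2 * m) := by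
  have pascal := Nat.choose_succ_succ (4 * m + 1) (2 * m)
  have symm := Nat.choose_symm_half (2 * m)
  rw [show 2 * (2 * m) + 1 = 4 * m + 1 by ring] at symm
  rw [oddBinom, show 2 * (m : ℤ) + 2 * m + 2 = (4 * m + 1 + 1 : ℕ) by push_cast; ring,
    show 2 * (m : ℤ) + 1 = (2 * m + 1 : ℕ) by push_cast; ring, zchoose_natCast, pascal, symm]
  push_cast
  ring

section Bivariate

variable {R : Type*} [CommRing R]

/-- A bivariate series is a series in `X` over `R⟦X⟧`; the coefficient of `X ^ a * Y ^ b` is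
`coeff b (coeff a _)`. -/
noncomputable abbrev Y : R⟦X⟧⟦X⟧ := C X

def IsQuadrantSupported (f : ℤ → ℤ → R) : Prop := ∀ a b, a < 0 ∨ b < 0 → f a b = 0

noncomputable def ofFun (f : ℤ → ℤ → R) : R⟦X⟧⟦X⟧ := mk fun a => mk fun b => f a b

@[simp] lemma coeff_coeff_ofFun (f : ℤ → ℤ → R) (a b : ℕ) :
    coeff b (coeff a (ofFun f)) = f a b := by
  simp [ofFun]

lemma X_pow_mul_Y_pow_mul_ofFun {f : ℤ → ℤ → R} (hf : IsQuadrantSupported f) (i j : ℕ) :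
    X ^ i * Y ^ j * ofFun f = ofFun fun a b => f (a - i) (b - j) := by
  ext a b
  rw [mul_assoc, coeff_X_pow_mul', ← map_pow, coeff_coeff_ofFun]
  split_ifs with hi
  · rw [coeff_C_mul, coeff_X_pow_mul', coeff_coeff_ofFun]
    split_ifs with hj
    · push_cast [hi, hj]
      rfl
    · exact (hf _ _ (Or.inr (by omega))).symm
  · exact (hf _ _ (Or.inl (by omega))).symm

lemma one_sub_X_add_Y_mul_ofFun {f : ℤ → ℤ → R} (hf : IsQuadrantSupported f) :
    (1 - X + Y) * ofFun f = ofFun fun a b => f a b - f (a - 1) b + f a (b - 1) := by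
  have expand : (1 - X + Y) * ofFun f =
      X ^ 0 * Y ^ 0 * ofFun f - X ^ 1 * Y ^ 0 * ofFun f + X ^ 0 * Y ^ 1 * ofFun f := by
    ring
  rw [expand]
  simp only [X_pow_mul_Y_pow_mul_ofFun hf]
  ext a b
  simp only [map_add, map_sub, coeff_coeff_ofFun, Nat.cast_zero, Nat.cast_one, sub_zero]

/-- `(1 - X - Y) ^ 2 - 4 X Y`, whose inverse square root generates the squares of binomials. -/
noncomputable def disc : R⟦X⟧⟦X⟧ := 1 - 2 * X - 2 * Y + X ^ 2 - 2 * X * Y + Y ^ 2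

lemma disc_mul_ofFun {f : ℤ → ℤ → R} (hf : IsQuadrantSupported f) :
    disc * ofFun f = ofFun fun a b => f a b - 2 * f (a - 1) b - 2 * f a (b - 1)
      - 2 * f (a - 1) (b - 1) + f (a - 2) b + f a (b - 2) := by
  have expand : disc * ofFun f = X ^ 0 * Y ^ 0 * ofFun f - 2 • (X ^ 1 * Y ^ 0 * ofFun f)
      - 2 • (X ^ 0 * Y ^ 1 * ofFun f) - 2 • (X ^ 1 * Y ^ 1 * ofFun f)
      + X ^ 2 * Y ^ 0 * ofFun f + X ^ 0 * Y ^ 2 * ofFun f := by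
    unfold disc
    ring
  rw [expand]
  simp only [X_pow_mul_Y_pow_mul_ofFun hf]
  ext a b
  simp only [map_add, map_sub, map_nsmul, coeff_coeff_ofFun]
  simp only [Nat.cast_zero, Nat.cast_one, Nat.cast_ofNat, sub_zero, nsmul_eq_mul]

lemma constantCoeff_disc : constantCoeff (disc : R⟦X⟧⟦X⟧) = (1 - X) ^ 2 := by
  simp only [disc, map_add, map_sub, map_mul, map_pow, map_one, map_ofNat, constantCoeff_X,
    constantCoeff_C]
  ring

lemma coeff_coeff_ofFun_mul_ofFun (f g : ℤ → ℤ → R) (a b : ℕ) :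
    coeff b (coeff a (ofFun f * ofFun g)) =
      ∑ r ∈ Finset.range (a + 1), ∑ s ∈ Finset.range (b + 1), f r s * g ↑(a - r) ↑(b - s) := by
  rw [coeff_mul, Finset.Nat.sum_antidiagonal_eq_sum_range_succ_mk, map_sum]
  refine Finset.sum_congr rfl fun r _ => ?_
  rw [coeff_mul, Finset.Nat.sum_antidiagonal_eq_sum_range_succ_mk]
  simp only [coeff_coeff_ofFun]

def derivX (f : ℤ → ℤ → R) : ℤ → ℤ → R := fun a b => (a + 1 : ℤ) * f (a + 1) b

lemma IsQuadrantSupported.derivX {f : ℤ → ℤ → R} (hf : IsQuadrantSupported f) :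
    IsQuadrantSupported (derivX f) := by
  rintro a b (ha | hb)
  · rcases (show a = -1 ∨ a + 1 < 0 by omega) with rfl | ha
    · simp [BinomialSquares.derivX]
    · simp [BinomialSquares.derivX, hf _ _ (Or.inl ha)]
  · simp [BinomialSquares.derivX, hf _ _ (Or.inr hb)]

lemma derivative_ofFun (f : ℤ → ℤ → R) : d⁄dX R⟦X⟧ (ofFun f) = ofFun (derivX f) := by
  ext a b
  rw [coeff_derivative, show ((a : R⟦X⟧) + 1) = C ((a : R) + 1) by simp, coeff_mul_C,
    coeff_coeff_ofFun, coeff_coeff_ofFun, derivX]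
  push_cast
  ring

lemma derivative_mul (f g : R⟦X⟧) : d⁄dX R (f * g) = f * d⁄dX R g + g * d⁄dX R f := by
  simpa only [smul_eq_mul] using (d⁄dX R).leibniz f g

lemma derivative_disc : d⁄dX R⟦X⟧ disc = -2 * (1 - X + Y) := by
  have two : d⁄dX R⟦X⟧ (2 : R⟦X⟧⟦X⟧) = 0 := by
    rw [← map_ofNat C 2, derivative_C]
  simp only [disc, map_add, map_sub, derivative_mul, derivative_pow, derivative_X, derivative_C,
    derivative_one, two]
  ring

instance [CharZero R] : CharZero R⟦X⟧ := RingHom.charZero (constantCoeff (R := R))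

end Bivariate

lemma isQuadrantSupported_binomSq : IsQuadrantSupported binomSq := by
  rintro a b (ha | hb)
  · rw [binomSq, zchoose_of_lt_zero ha, zero_pow two_ne_zero]
  · rw [binomSq, zchoose_of_lt (by omega), zero_pow two_ne_zero]

lemma isQuadrantSupported_oddBinom : IsQuadrantSupported oddBinom := by
  rintro a b (ha | hb)
  · exact zchoose_of_lt_zero (by omega)
  · exact zchoose_of_lt (by omega)

noncomputable def binomSeries : ℤ⟦X⟧⟦X⟧ := ofFun binomSq

lemma disc_mul_derivative_binomSeries :
    disc * d⁄dX ℤ⟦X⟧ binomSeries = (1 - X + Y) * binomSeries := by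
  rw [binomSeries, derivative_ofFun, disc_mul_ofFun isQuadrantSupported_binomSq.derivX,
    one_sub_X_add_Y_mul_ofFun isQuadrantSupported_binomSq]
  ext a b
  simp only [coeff_coeff_ofFun, derivX, Int.cast_id]
  convert binomSq_recurrence (Nat.cast_nonneg a) (Nat.cast_nonneg b) using 2
  ring_nf

lemma derivative_disc_mul_binomSeries_sq : d⁄dX ℤ⟦X⟧ (disc * binomSeries ^ 2) = 0 := by
  rw [derivative_mul, derivative_pow, derivative_disc]
  linear_combination (2 * binomSeries) * disc_mul_derivative_binomSeries

lemma constantCoeff_binomSeries : constantCoeff binomSeries = mk 1 := by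
  ext b
  rw [binomSeries, ← coeff_zero_eq_constantCoeff_apply, coeff_coeff_ofFun, coeff_mk]
  simp [binomSq, zchoose]

theorem disc_mul_binomSeries_sq : disc * binomSeries ^ 2 = 1 := by
  refine derivative.ext (by rw [derivative_disc_mul_binomSeries_sq, derivative_one]) ?_
  rw [map_mul, map_pow, constantCoeff_disc, constantCoeff_binomSeries, map_one, ← mul_pow,
    mul_comm, mk_one_mul_one_sub_eq_one, one_pow]

lemma disc_mul_ofFun_oddBinom : disc * ofFun oddBinom = 2 := by
  rw [disc_mul_ofFun isQuadrantSupported_oddBinom]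
  ext a b
  rw [coeff_coeff_ofFun, oddBinom_recurrence (Nat.cast_nonneg a) (Nat.cast_nonneg b),
    ← map_ofNat C, ← map_ofNat C, coeff_C, apply_ite (coeff b), coeff_C, map_zero, ite_and]
  simp only [Nat.cast_eq_zero]

theorem ofFun_oddBinom : ofFun oddBinom = 2 * binomSeries ^ 2 :=
  calc ofFun oddBinom = ofFun oddBinom * (disc * binomSeries ^ 2) := by
        rw [disc_mul_binomSeries_sq, mul_one]
    _ = disc * ofFun oddBinom * binomSeries ^ 2 := by ring
    _ = 2 * binomSeries ^ 2 := by rw [disc_mul_ofFun_oddBinom]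

lemma coeff_coeff_binomSeries_sq (m : ℕ) :
    coeff m (coeff m (binomSeries ^ 2)) =
      ((∑ r ∈ Finset.range (m + 1), ∑ s ∈ Finset.range (m + 1),
        ((r + s).choose r * (2 * m - r - s).choose (m - r)) ^ 2 : ℕ) : ℤ) := by
  rw [sq, binomSeries, coeff_coeff_ofFun_mul_ofFun]
  push_cast
  refine Finset.sum_congr rfl fun r hr => Finset.sum_congr rfl fun s hs => ?_
  rw [Finset.mem_range] at hr hs
  rw [binomSq_natCast, binomSq_natCast, show m - r + (m - s) = 2 * m - r - s by omega, mul_pow]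

end BinomialSquares

open BinomialSquares

theorem stmt_2_general (m : ℕ) :
    ∑ r ∈ Finset.range (m + 1), ∑ s ∈ Finset.range (m + 1),
      ((r + s).choose r * (2 * m - r - s).choose (m - r)) ^ 2
      = (4 * m + 1).choose (2 * m) := by
  have two : (2 : ℤ⟦X⟧⟦X⟧) = C (C 2) := by simp only [map_ofNat]
  have diag := congrArg (fun φ => coeff m (coeff m φ)) ofFun_oddBinom
  simp only [coeff_coeff_ofFun, oddBinom_natCast_self, two, coeff_C_mul,
    coeff_coeff_binomSeries_sq] at diag
  exact_mod_cast (mul_left_cancel₀ two_ne_zero diag).symm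

theorem stmt_2 (m : ℕ) (hm : 1 ≤ m) :
    ∑ r ∈ Finset.range (m + 1), ∑ s ∈ Finset.range (m + 1),
      ((r + s).choose r * (2 * m - r - s).choose (m - r)) ^ 2
      = (4 * m + 1).choose (2 * m) :=
  stmt_2_general m
end

section
/- For all natural numbers m ≥ 1 and every fixed s with 0 ≤ s ≤ m, the sum over r from 0 to m of binom(m,r)·binom(m,s)/binom(2m, r+s) equals (2m+1)/(m+1), where the quotients are taken in the rationals (or reals). -/
/-!
Both `C(m,r)·C(n,s)·C(m+n,m)` and `C(m+n,r+s)·C(r+s,s)·C(m+n-r-s,n-s)` are the multinomial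
coefficient `(m+n)! / (r! s! (m-r)! (n-s)!)`, so the summand can be rewritten with the fixed
denominator `C(m+n,m)`. The new numerators `C(s+r,s)·C((n-s)+(m-r),n-s)` are the coefficients of
`(1-X)^-(s+1)` and `(1-X)^-(n-s+1)`, so their sum over `r` is the coefficient of `X^m` in
`(1-X)^-(n+2)`, namely `C(m+n+1,n+1)`. For `n = m`, `C(2m+1,m+1) / C(2m,m) = (2m+1)/(m+1)`.
-/

open Finset Nat

theorem sum_antidiagonal_add_choose_mul_add_choose (s t n : ℕ) :
    ∑ ij ∈ antidiagonal n, (s + ij.1).choose s * (t + ij.2).choose t =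
      (s + t + 1 + n).choose (s + t + 1) := by
  have h : (PowerSeries.mk 1 : PowerSeries ℤ) ^ (s + 1) * PowerSeries.mk 1 ^ (t + 1) =
      PowerSeries.mk 1 ^ (s + t + 1 + 1) := by
    rw [← pow_add]; ring_nf
  simp only [PowerSeries.mk_one_pow_eq_mk_choose_add] at h
  have hn := congrArg (PowerSeries.coeff n) h
  simp only [PowerSeries.coeff_mul, PowerSeries.coeff_mk] at hn
  exact_mod_cast hn

theorem choose_mul_choose_div_choose_add {m n r s : ℕ} (hr : r ≤ m) (hs : s ≤ n) :
    (m.choose r * n.choose s : ℚ) / (m + n).choose (r + s) =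
      (r + s).choose s * (m + n - (r + s)).choose (n - s) / (m + n).choose m := by
  rw [cast_choose ℚ hr, cast_choose ℚ hs, cast_choose ℚ (_root_.add_le_add hr hs),
    cast_choose ℚ le_add_self, cast_choose ℚ (by omega), cast_choose ℚ le_self_add,
    show m + n - (r + s) - (n - s) = m - r by omega, add_tsub_cancel_left, add_tsub_cancel_right]
  field_simp

theorem sum_range_choose_mul_choose_div_choose_add {m n s : ℕ} (hs : s ≤ n) :
    ∑ r ∈ range (m + 1), (m.choose r * n.choose s : ℚ) / (m + n).choose (r + s) =
      (m + n + 1).choose (n + 1) / (m + n).choose m := by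
  have hconv := sum_antidiagonal_add_choose_mul_add_choose s (n - s) m
  rw [Nat.sum_antidiagonal_eq_sum_range_succ_mk] at hconv
  rw [show m + n + 1 = s + (n - s) + 1 + m by omega, show n + 1 = s + (n - s) + 1 by omega,
    ← hconv, Nat.cast_sum, sum_div]
  refine sum_congr rfl fun r hr => ?_
  have hrm : r ≤ m := Nat.lt_succ_iff.mp (mem_range.mp hr)
  rw [choose_mul_choose_div_choose_add hrm hs, add_comm s r,
    show n - s + (m - r) = m + n - (r + s) by omega, Nat.cast_mul]

theorem two_mul_add_one_choose_succ_div_two_mul_choose (m : ℕ) :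
    ((2 * m + 1).choose (m + 1) : ℚ) / (2 * m).choose m = (2 * m + 1) / (m + 1) := by
  rw [div_eq_div_iff (by exact_mod_cast (choose_pos (by omega)).ne') (by positivity)]
  exact_mod_cast (add_one_mul_choose_eq (2 * m) m).symm

theorem stmt_4_general (m s : ℕ) (hs : s ≤ m) :
    ∑ r ∈ Finset.range (m + 1),
      (m.choose r * m.choose s : ℚ) / ((2 * m).choose (r + s) : ℚ)
      = (2 * m + 1 : ℚ) / (m + 1 : ℚ) := by
  rw [two_mul, sum_range_choose_mul_choose_div_choose_add hs, ← two_mul]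
  exact two_mul_add_one_choose_succ_div_two_mul_choose m

theorem stmt_4 (m s : ℕ) (hm : 1 ≤ m) (hs : s ≤ m) :
    ∑ r ∈ Finset.range (m + 1),
      (m.choose r * m.choose s : ℚ) / ((2 * m).choose (r + s) : ℚ)
      = (2 * m + 1 : ℚ) / (m + 1 : ℚ) :=
  stmt_4_general m s hs
end

section
/- For all natural numbers m ≥ 1, the sum over r from 0 to m of binom(m,r)^2 / binom(2m, 2r) equals 4^m / binom(2m, m), with quotients taken in the rationals (or reals). -/
open Finset

private noncomputable def cb (k : ℕ) : ℚ := Nat.centralBinom k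

private lemma cb_succ (k : ℕ) : ((k : ℚ) + 1) * cb (k + 1) = (4 * k + 2) * cb k := by
  have := Nat.succ_mul_centralBinom_succ k
  have h : ((k + 1) * Nat.centralBinom (k + 1) : ℚ) = (2 * (2 * k + 1) * Nat.centralBinom k : ℚ) := by
    exact_mod_cast congrArg (Nat.cast : ℕ → ℚ) this
  push_cast at h
  unfold cb; linarith

private lemma sym_sum (n : ℕ) :
    2 * ∑ k ∈ range (n + 1), (k : ℚ) * (cb k * cb (n - k))
      = (n : ℚ) * ∑ k ∈ range (n + 1), cb k * cb (n - k) := by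
  have h := Finset.sum_range_reflect (fun k => (k : ℚ) * (cb k * cb (n - k))) (n + 1)
  simp only [Nat.add_sub_cancel] at h
  have h2 : ∑ k ∈ range (n + 1), ((n - k : ℕ) : ℚ) * (cb (n - k) * cb (n - (n - k)))
      = ∑ k ∈ range (n + 1), (k : ℚ) * (cb k * cb (n - k)) := h
  rw [two_mul]
  nth_rewrite 2 [← h2]
  rw [← Finset.sum_add_distrib, Finset.mul_sum]
  apply Finset.sum_congr rfl
  intro k hk
  have hk' : k ≤ n := by simpa using Nat.lt_succ_iff.mp (Finset.mem_range.mp hk)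
  rw [Nat.sub_sub_self hk', Nat.cast_sub hk']
  ring

private lemma conv (n : ℕ) : ∑ k ∈ range (n + 1), cb k * cb (n - k) = 4 ^ n := by
  induction n with
  | zero => simp [cb, Nat.centralBinom]
  | succ n ih =>
    -- T := ∑_{k∈range(n+2)} k * cb k * cb (n+1-k)
    have hT1 : ∑ k ∈ range (n + 2), (k : ℚ) * (cb k * cb (n + 1 - k))
        = ((n : ℚ) + 1) / 2 * ∑ k ∈ range (n + 2), cb k * cb (n + 1 - k) := by
      have := sym_sum (n + 1)
      push_cast at this ⊢
      linarith
    have hT2 : ∑ k ∈ range (n + 2), (k : ℚ) * (cb k * cb (n + 1 - k))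
        = (2 * n + 2) * 4 ^ n := by
      rw [Finset.sum_range_succ']
      simp only [Nat.cast_zero, zero_mul, add_zero]
      have step : ∀ j ∈ range (n + 1), ((j : ℚ) + 1) * (cb (j + 1) * cb (n - j))
          = (4 * j + 2) * (cb j * cb (n - j)) := by
        intro j hj
        rw [← mul_assoc, cb_succ, mul_assoc]
      push_cast
      calc ∑ j ∈ range (n + 1), ((j : ℚ) + 1) * (cb (j + 1) * cb (n - j))
          = ∑ j ∈ range (n + 1), (4 * (j : ℚ) + 2) * (cb j * cb (n - j)) :=
            Finset.sum_congr rfl step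
        _ = 4 * ∑ j ∈ range (n + 1), (j : ℚ) * (cb j * cb (n - j))
            + 2 * ∑ j ∈ range (n + 1), cb j * cb (n - j) := by
            rw [Finset.mul_sum, Finset.mul_sum, ← Finset.sum_add_distrib]
            apply Finset.sum_congr rfl; intros; ring
        _ = 4 * ((n : ℚ) / 2 * 4 ^ n) + 2 * 4 ^ n := by
            have hs := sym_sum n
            rw [ih] at hs ⊢
            have : ∑ j ∈ range (n + 1), (j : ℚ) * (cb j * cb (n - j)) = (n : ℚ) / 2 * 4 ^ n := by
              linarith
            rw [this]
        _ = (2 * (n : ℚ) + 2) * 4 ^ n := by ring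
    have hne : ((n : ℚ) + 1) / 2 ≠ 0 := by positivity
    have := hT1.symm.trans hT2
    have h4 : (4 : ℚ) ^ (n + 1) = 4 * 4 ^ n := by ring
    rw [h4]
    field_simp at this
    -- this : (n+1) * S = ... maybe; solve
    nlinarith [this]

theorem stmt_5 (m : ℕ) (hm : 1 ≤ m) :
    ∑ r ∈ Finset.range (m + 1),
      (m.choose r : ℚ) ^ 2 / ((2 * m).choose (2 * r) : ℚ)
      = (4 : ℚ) ^ m / ((2 * m).choose m : ℚ) := by
  have hCm : ((2 * m).choose m : ℚ) ≠ 0 := by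
    have := Nat.choose_pos (show m ≤ 2*m by omega)
    positivity
  have key : ∀ r ∈ Finset.range (m + 1),
      (m.choose r : ℚ) ^ 2 / ((2 * m).choose (2 * r) : ℚ)
        = cb r * cb (m - r) / ((2 * m).choose m : ℚ) := by
    intro r hr
    have hrm : r ≤ m := Nat.lt_succ_iff.mp (Finset.mem_range.mp hr)
    have e1 : (m.choose r : ℚ) = m.factorial / (r.factorial * (m - r).factorial) :=
      Nat.cast_choose ℚ hrm
    have e2 : (((2 * m).choose (2 * r)) : ℚ)
        = (2 * m).factorial / ((2 * r).factorial * (2 * (m - r)).factorial) := by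
      have h := Nat.cast_choose ℚ (by omega : 2 * r ≤ 2 * m)
      have : 2 * m - 2 * r = 2 * (m - r) := by omega
      rwa [this] at h
    have e3 : (((2 * m).choose m) : ℚ) = (2 * m).factorial / (m.factorial * m.factorial) := by
      have h := Nat.cast_choose ℚ (by omega : m ≤ 2 * m)
      have : 2 * m - m = m := by omega
      rwa [this] at h
    have e4 : cb r = (2 * r).factorial / (r.factorial * r.factorial) := by
      unfold cb Nat.centralBinom
      have h := Nat.cast_choose ℚ (by omega : r ≤ 2 * r)
      have : 2 * r - r = r := by omega
      rwa [this] at h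
    have e5 : cb (m - r) = (2 * (m - r)).factorial / ((m - r).factorial * (m - r).factorial) := by
      unfold cb Nat.centralBinom
      have h := Nat.cast_choose ℚ (by omega : (m - r) ≤ 2 * (m - r))
      have : 2 * (m - r) - (m - r) = (m - r) := by omega
      rwa [this] at h
    rw [e1, e2, e3, e4, e5]
    have f1 : (r.factorial : ℚ) ≠ 0 := by exact_mod_cast r.factorial_ne_zero
    have f2 : ((m - r).factorial : ℚ) ≠ 0 := by exact_mod_cast (m - r).factorial_ne_zero
    have f3 : (m.factorial : ℚ) ≠ 0 := by exact_mod_cast m.factorial_ne_zero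
    have f4 : ((2 * r).factorial : ℚ) ≠ 0 := by exact_mod_cast (2 * r).factorial_ne_zero
    have f5 : ((2 * (m - r)).factorial : ℚ) ≠ 0 := by exact_mod_cast (2 * (m - r)).factorial_ne_zero
    have f6 : ((2 * m).factorial : ℚ) ≠ 0 := by exact_mod_cast (2 * m).factorial_ne_zero
    field_simp
  rw [Finset.sum_congr rfl key, ← Finset.sum_div, conv]
end

section
/- For all natural numbers m ≥ 1, the double sum over r from 0 to m and s from 0 to m of ( binom(m,r)·binom(m,s)/binom(2m, r+s) )^2 equals binom(4m+1, 2m) / binom(2m, m)^2, with quotients taken in the rationals (or reals). -/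
/-!
`C(r+s, r) C(2m-r-s, m-r) = A(m,r,s) C(2m, m)` is the number of monotone lattice paths from
`(0,0)` to `(m,m)` through `(r,s)`, so the claim counts pairs of such paths weighted by the
number of lattice points they share. Let the two paths have `n` steps, `a` resp. `b` of them east.
Splitting off the last step of each path gives Pascal's recurrence in the four directions
`(a,b), (a-1,b), (a,b-1), (a-1,b-1)`, plus the pairs meeting only at their common endpoint when
`a = b`. The truncated Vandermonde sum `∑_{j ≤ min(a,b)} C(n+1,j) C(n+1,a+b+1-j)` obeys the same
recurrence and initial values; at `n = 2m`, `a = b = m` it is half of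
`∑_j C(2m+1,j) C(2m+1,2m+1-j) = C(4m+2,2m+1) = 2 C(4m+1,2m)`.
-/
open Finset

/-- `n.choose` extended by zero to negative lower indices, so that Pascal's rule holds for
every `j : ℤ`. -/
def intChoose (n : ℕ) : ℤ → ℕ
  | (k : ℕ) => n.choose k
  | Int.negSucc _ => 0

@[simp]
lemma intChoose_natCast (n k : ℕ) : intChoose n k = n.choose k := rfl

lemma intChoose_of_neg {n : ℕ} {j : ℤ} (hj : j < 0) : intChoose n j = 0 := by
  obtain ⟨k, rfl⟩ := Int.exists_eq_neg_ofNat hj.le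
  rcases k with _ | k
  · simp at hj
  · rfl

lemma intChoose_of_lt {n : ℕ} {j : ℤ} (hj : n < j) : intChoose n j = 0 := by
  lift j to ℕ using by omega
  exact Nat.choose_eq_zero_of_lt (by omega)

lemma intChoose_zero_left (j : ℤ) : intChoose 0 j = if j = 0 then 1 else 0 := by
  rcases lt_trichotomy j 0 with h | rfl | h
  · simp [intChoose_of_neg h, h.ne]
  · rfl
  · simp [intChoose_of_lt h, h.ne']

lemma intChoose_succ_left (n : ℕ) (j : ℤ) :
    intChoose (n + 1) j = intChoose n j + intChoose n (j - 1) := by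
  rcases j with (_ | k) | k
  · rw [show Int.ofNat 0 - 1 = -1 by rfl, intChoose_of_neg (j := -1) (by norm_num)]
    exact (Nat.choose_zero_right _).trans (Nat.choose_zero_right _).symm
  · rw [show Int.ofNat (k + 1) - 1 = (k : ℤ) by simp]
    exact (Nat.choose_succ_succ' n k).trans (add_comm _ _)
  · rfl

lemma sum_range_ite_choose_sq (n : ℕ) (a b : ℤ) :
    ∑ i ∈ range (n + 1), (if (i : ℤ) = a ∧ (i : ℤ) = b then n.choose i ^ 2 else 0)
      = if a = b then intChoose n a ^ 2 else 0 := by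
  split_ifs with hab
  · subst hab
    simp only [and_self]
    rcases lt_or_ge a 0 with ha | ha
    · rw [intChoose_of_neg ha, zero_pow two_ne_zero]
      exact sum_eq_zero fun i _ => if_neg (by omega)
    · lift a to ℕ using ha
      simp only [Nat.cast_inj, sum_ite_eq', mem_range, intChoose_natCast]
      exact ite_eq_left_iff.mpr fun h => by rw [Nat.choose_eq_zero_of_lt (by omega)]; rfl
  · exact sum_eq_zero fun i _ => if_neg (by omega)

/-- Pairs of monotone lattice paths with `n` steps, `a` resp. `b` of them east, together with a
common lattice point, reached after `x.1` steps of which `i` are east. -/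
def pathMeetings (n : ℕ) (a b : ℤ) : ℕ :=
  ∑ x ∈ antidiagonal n, ∑ i ∈ range (x.1 + 1),
    x.1.choose i ^ 2 * (intChoose x.2 (a - i) * intChoose x.2 (b - i))

lemma pathMeetings_zero (a b : ℤ) : pathMeetings 0 a b = if a = 0 ∧ b = 0 then 1 else 0 := by
  simp [pathMeetings, intChoose_zero_left, ← ite_and, and_comm]

lemma pathMeetings_succ (n : ℕ) (a b : ℤ) :
    pathMeetings (n + 1) a b = pathMeetings n a b + pathMeetings n (a - 1) b
      + pathMeetings n a (b - 1) + pathMeetings n (a - 1) (b - 1)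
      + if a = b then intChoose (n + 1) a ^ 2 else 0 := by
  have hlast : ∑ i ∈ range (n + 1 + 1),
      (n + 1).choose i ^ 2 * (intChoose 0 (a - i) * intChoose 0 (b - i))
      = if a = b then intChoose (n + 1) a ^ 2 else 0 := by
    rw [← sum_range_ite_choose_sq]
    refine sum_congr rfl fun i _ => ?_
    simp only [intChoose_zero_left]
    split_ifs <;> omega
  simp only [pathMeetings, Nat.sum_antidiagonal_succ', hlast, intChoose_succ_left]
  simp only [sub_sub, sub_right_comm _ (1 : ℤ), mul_add, add_mul, sum_add_distrib]
  ring

def truncatedConvolution (n : ℕ) (a b : ℤ) : ℕ :=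
  ∑ j ∈ range (n + 2), if (j : ℤ) ≤ a ∧ (j : ℤ) ≤ b then
    intChoose (n + 1) j * intChoose (n + 1) (a + b + 1 - j) else 0

lemma truncatedConvolution_zero (a b : ℤ) :
    truncatedConvolution 0 a b = if a = 0 ∧ b = 0 then 1 else 0 := by
  simp only [truncatedConvolution, sum_range_succ, sum_range_zero, intChoose_succ_left,
    intChoose_zero_left]
  split_ifs <;> omega

lemma truncatedConvolution_sub_one_add_sub_one (n : ℕ) (a b : ℤ) :
    ∑ j ∈ range (n + 2), (if (j : ℤ) ≤ a ∧ (j : ℤ) ≤ b then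
      intChoose (n + 1) j * intChoose (n + 1) (a + b - j) else 0)
    + ∑ j ∈ range (n + 2), (if (j : ℤ) ≤ a - 1 ∧ (j : ℤ) ≤ b - 1 then
      intChoose (n + 1) j * intChoose (n + 1) (a + b - j) else 0)
      = truncatedConvolution n (a - 1) b + truncatedConvolution n a (b - 1)
        + if a = b then intChoose (n + 1) a ^ 2 else 0 := by
  rw [← sum_range_ite_choose_sq, truncatedConvolution, truncatedConvolution,
    ← sum_add_distrib, ← sum_add_distrib, ← sum_add_distrib]
  refine sum_congr rfl fun j _ => ?_
  rw [show a - 1 + b + 1 - (j : ℤ) = a + b - j by ring,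
    show a + (b - 1) + 1 - (j : ℤ) = a + b - j by ring]
  by_cases hj : (j : ℤ) = a ∧ (j : ℤ) = b
  · obtain ⟨rfl, rfl⟩ := hj
    simp [sq]
  · rw [if_neg hj]
    split_ifs <;> omega

lemma truncatedConvolution_succ (n : ℕ) (a b : ℤ) :
    truncatedConvolution (n + 1) a b = truncatedConvolution n a b
      + truncatedConvolution n (a - 1) b + truncatedConvolution n a (b - 1)
      + truncatedConvolution n (a - 1) (b - 1)
      + if a = b then intChoose (n + 1) a ^ 2 else 0 := by
  rw [truncatedConvolution]
  simp only [intChoose_succ_left (n + 1), mul_add, add_mul, ite_add_zero, sum_add_distrib]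
  set F := intChoose (n + 1) with hF
  have hF_top : F (n + 2 : ℕ) = 0 := intChoose_of_lt (by push_cast; omega)
  have hF_neg : F (-1) = 0 := intChoose_of_neg (by norm_num)
  have h1 : ∑ j ∈ range (n + 1 + 2), (if (j : ℤ) ≤ a ∧ (j : ℤ) ≤ b then
      F j * F (a + b + 1 - j) else 0) = truncatedConvolution n a b := by
    rw [sum_range_succ, hF_top]; simp [truncatedConvolution, F]
  have h2 : ∑ j ∈ range (n + 1 + 2), (if (j : ℤ) ≤ a ∧ (j : ℤ) ≤ b then
      F j * F (a + b + 1 - j - 1) else 0)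
      = ∑ j ∈ range (n + 2), (if (j : ℤ) ≤ a ∧ (j : ℤ) ≤ b then
      F j * F (a + b - j) else 0) := by
    rw [sum_range_succ, hF_top]
    simp only [zero_mul, ite_self, add_zero]
    exact sum_congr rfl fun j _ => by rw [sub_right_comm, add_sub_cancel_right]
  have h3 : ∑ j ∈ range (n + 1 + 2), (if (j : ℤ) ≤ a ∧ (j : ℤ) ≤ b then
      F (j - 1) * F (a + b + 1 - j) else 0)
      = ∑ j ∈ range (n + 2), (if (j : ℤ) ≤ a - 1 ∧ (j : ℤ) ≤ b - 1 then
      F j * F (a + b - j) else 0) := by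
    rw [sum_range_succ']
    simp only [Nat.cast_zero, zero_sub, hF_neg, zero_mul, ite_self, add_zero]
    refine sum_congr rfl fun j _ => ?_
    push_cast
    rw [add_sub_cancel_right, show a + b + 1 - (j + 1 : ℤ) = a + b - j by ring]
    exact if_congr (by omega) rfl rfl
  have h4 : ∑ j ∈ range (n + 1 + 2), (if (j : ℤ) ≤ a ∧ (j : ℤ) ≤ b then
      F (j - 1) * F (a + b + 1 - j - 1) else 0) = truncatedConvolution n (a - 1) (b - 1) := by
    rw [sum_range_succ', truncatedConvolution]
    simp only [Nat.cast_zero, zero_sub, hF_neg, zero_mul, ite_self, add_zero]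
    refine sum_congr rfl fun j _ => ?_
    push_cast
    rw [add_sub_cancel_right, show a + b + 1 - (j + 1 : ℤ) - 1 = a - 1 + (b - 1) + 1 - j by ring]
    exact if_congr (by omega) rfl rfl
  have hmixed := truncatedConvolution_sub_one_add_sub_one n a b
  rw [← hF] at hmixed
  rw [h1, h2, h3, h4]
  omega

theorem pathMeetings_eq_truncatedConvolution (n : ℕ) (a b : ℤ) :
    pathMeetings n a b = truncatedConvolution n a b := by
  induction n generalizing a b with
  | zero => rw [pathMeetings_zero, truncatedConvolution_zero]
  | succ n ih => rw [pathMeetings_succ, truncatedConvolution_succ, ih, ih, ih, ih]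

lemma truncatedConvolution_diag (m : ℕ) :
    truncatedConvolution (2 * m) m m = (4 * m + 1).choose (2 * m) := by
  set g : ℕ → ℕ := fun j => (2 * m + 1).choose j * (2 * m + 1).choose (2 * m + 1 - j)
  have hT : truncatedConvolution (2 * m) m m
      = ∑ j ∈ range (2 * m + 2), if j ≤ m then g j else 0 := by
    refine sum_congr rfl fun j hj => ?_
    rw [mem_range] at hj
    rw [show (m : ℤ) + m + 1 - j = ((2 * m + 1 - j : ℕ) : ℤ) by
      push_cast [Nat.cast_sub (by omega : j ≤ 2 * m + 1)]; ring]
    simp [g]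
  have hreflect : ∑ j ∈ range (2 * m + 2), (if j ≤ m then g j else 0)
      = ∑ j ∈ range (2 * m + 2), if j ≤ m then 0 else g j := by
    rw [← sum_range_reflect]
    refine sum_congr rfl fun j hj => ?_
    rw [mem_range] at hj
    have hg : g (2 * m + 2 - 1 - j) = g j := by
      simp only [g]
      rw [show 2 * m + 1 - (2 * m + 2 - 1 - j) = j by omega,
        show 2 * m + 2 - 1 - j = 2 * m + 1 - j by omega, mul_comm]
    rw [hg]
    split_ifs <;> first | rfl | omega
  have hvandermonde : ∑ j ∈ range (2 * m + 2), g j = (4 * m + 2).choose (2 * m + 1) := by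
    rw [show 4 * m + 2 = (2 * m + 1) + (2 * m + 1) by ring, Nat.add_choose_eq,
      Nat.sum_antidiagonal_eq_sum_range_succ_mk]
  have hhalf : (4 * m + 2).choose (2 * m + 1) = 2 * (4 * m + 1).choose (2 * m) := by
    have hsymm := Nat.choose_symm_half (2 * m)
    rw [show 2 * (2 * m) + 1 = 4 * m + 1 by ring] at hsymm
    rw [show 4 * m + 2 = (4 * m + 1) + 1 by ring, Nat.choose_succ_succ', hsymm]
    ring
  have hsplit : ∑ j ∈ range (2 * m + 2), (if j ≤ m then g j else 0)
      + ∑ j ∈ range (2 * m + 2), (if j ≤ m then 0 else g j)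
      = ∑ j ∈ range (2 * m + 2), g j := by
    rw [← sum_add_distrib]
    exact sum_congr rfl fun j _ => by split_ifs <;> simp
  omega

lemma pathMeetings_diag (m : ℕ) :
    pathMeetings (2 * m) m m = ∑ r ∈ range (m + 1), ∑ s ∈ range (m + 1),
      ((r + s).choose r * (2 * m - (r + s)).choose (m - r)) ^ 2 := by
  rw [pathMeetings, sum_sigma', ← sum_product']
  symm
  refine sum_bij_ne_zero (fun p _ _ => ⟨(p.1 + p.2, 2 * m - (p.1 + p.2)), p.1⟩) ?_ ?_ ?_ ?_
  · intro p hp _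
    simp only [mem_product, mem_range] at hp
    simp only [mem_sigma, HasAntidiagonal.mem_antidiagonal, mem_range]
    omega
  · intro p _ _ q _ _ h
    simp only [Sigma.mk.injEq, Prod.mk.injEq, heq_eq_eq] at h
    ext <;> omega
  · rintro ⟨⟨x, y⟩, i⟩ hp hne
    dsimp only at hne ⊢
    simp only [mem_sigma, HasAntidiagonal.mem_antidiagonal, mem_range] at hp
    have hi : i ≤ m := by
      by_contra h
      exact hne (by rw [intChoose_of_neg (by omega)]; simp)
    have hy : m - i ≤ y := by
      by_contra h
      exact hne (by rw [intChoose_of_lt (by omega)]; simp)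
    refine ⟨(i, x - i), by simp only [mem_product, mem_range]; omega, ?_, ?_⟩
    · dsimp only
      rw [show i + (x - i) = x by omega, show 2 * m - x = y by omega]
      exact pow_ne_zero _ (mul_ne_zero (Nat.choose_pos (by omega)).ne' (Nat.choose_pos hy).ne')
    · simp only [Sigma.mk.injEq, Prod.mk.injEq, heq_eq_eq, and_true]; omega
  · rintro ⟨r, s⟩ hp _
    simp only [mem_product, mem_range] at hp
    rw [show (m : ℤ) - r = ((m - r : ℕ) : ℤ) by omega, intChoose_natCast]
    ring

lemma choose_mul_choose_div_choose {K : Type*} [Field K] [CharZero K] {m r s : ℕ}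
    (hr : r ≤ m) (hs : s ≤ m) :
    (m.choose r * m.choose s : K) / (2 * m).choose (r + s)
      = (r + s).choose r * (2 * m - (r + s)).choose (m - r) / (2 * m).choose m := by
  rw [Nat.cast_choose K hr, Nat.cast_choose K hs, Nat.cast_choose K (by omega : r + s ≤ 2 * m),
    Nat.cast_choose K (by omega : r ≤ r + s),
    Nat.cast_choose K (by omega : m - r ≤ 2 * m - (r + s)),
    Nat.cast_choose K (by omega : m ≤ 2 * m), show r + s - r = s by omega,
    show 2 * m - (r + s) - (m - r) = m - s by omega, show 2 * m - m = m by omega]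
  field_simp

theorem sum_sq_choose_mul_choose (m : ℕ) :
    ∑ r ∈ range (m + 1), ∑ s ∈ range (m + 1),
      ((r + s).choose r * (2 * m - (r + s)).choose (m - r)) ^ 2 = (4 * m + 1).choose (2 * m) := by
  rw [← pathMeetings_diag, pathMeetings_eq_truncatedConvolution, truncatedConvolution_diag]

theorem stmt_6_general (m : ℕ) :
    ∑ r ∈ Finset.range (m + 1), ∑ s ∈ Finset.range (m + 1),
      ((m.choose r * m.choose s : ℚ) / ((2 * m).choose (r + s) : ℚ)) ^ 2
      = ((4 * m + 1).choose (2 * m) : ℚ) / ((2 * m).choose m : ℚ) ^ 2 := by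
  have hterm : ∀ r ∈ range (m + 1), ∀ s ∈ range (m + 1),
      ((m.choose r * m.choose s : ℚ) / ((2 * m).choose (r + s) : ℚ)) ^ 2
        = (((r + s).choose r * (2 * m - (r + s)).choose (m - r)) ^ 2 : ℕ)
          / ((2 * m).choose m : ℚ) ^ 2 := by
    intro r hr s hs
    rw [choose_mul_choose_div_choose (by simpa [Nat.lt_succ_iff] using hr)
      (by simpa [Nat.lt_succ_iff] using hs), div_pow]
    norm_cast
  rw [sum_congr rfl fun r hr => sum_congr rfl (hterm r hr)]
  simp only [← sum_div, ← Nat.cast_sum, sum_sq_choose_mul_choose]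

theorem stmt_6 (m : ℕ) (hm : 1 ≤ m) :
    ∑ r ∈ Finset.range (m + 1), ∑ s ∈ Finset.range (m + 1),
      ((m.choose r * m.choose s : ℚ) / ((2 * m).choose (r + s) : ℚ)) ^ 2
      = ((4 * m + 1).choose (2 * m) : ℚ) / ((2 * m).choose m : ℚ) ^ 2 :=
  stmt_6_general m
end

section
/- For every natural number m ≥ 1, the central binomial coefficient satisfies the strict two-sided bound (4^m / sqrt(π·m)) · (1 − 1/(8m)) < binom(2m, m) < (4^m / sqrt(π·m)) · (1 − 1/(9m)). -/
/-!
Write `C m = centralBinom m`. Wallis' product gives `C m ² π m / 16 ^ m → 1`, hence for every `c`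
the squared ratio of `C m` to `4 ^ m / √(π m) * (1 - 1 / (c m))` tends to 1 as well. By
`(m + 1) C (m + 1) = 2 (2m + 1) C m`, consecutive ratios compare as `(2m + 1)² (m + 1) (cm - 1)²`
against `4 m³ (c (m + 1) - 1)²`, whose difference is
`c (8 - c) m³ - (c² - 10c + 8) m² + (2c - 5) m - 1`. For `c = 8` this is `8m² + 11m - 1 > 0`, so
the ratio decreases strictly to 1 and stays above 1; for `c = 9` it is `-9m³ + m² + 13m - 1 < 0`
once `m ≥ 2`, so the ratio increases strictly to 1 from there on, and `m = 1` reduces to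
`π < 256 / 81`.
-/

open Real Filter Topology Nat

lemma Real.Wallis.W_mul_centralBinom_sq (m : ℕ) :
    Wallis.W m * ((centralBinom m : ℝ) ^ 2 * (2 * m + 1)) = 16 ^ m := by
  have hfac : (centralBinom m : ℝ) * m ! * m ! = (2 * m)! := by
    rw [centralBinom_eq_two_mul_choose, two_mul]
    exact_mod_cast add_choose_mul_factorial_mul_factorial m m
  have := (centralBinom_pos m).ne'
  rw [Wallis.W_eq_factorial_ratio, ← hfac, pow_mul]
  field_simp
  norm_num

lemma tendsto_centralBinom_sq_mul_pi_div :
    Tendsto (fun m : ℕ => (centralBinom m : ℝ) ^ 2 * π * m / 16 ^ m) atTop (𝓝 1) := by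
  have hlim := (Stirling.tendsto_self_div_two_mul_self_add_one.const_mul π).div
    Wallis.tendsto_W_nhds_pi_div_two (by positivity)
  rw [show π * (1 / 2) / (π / 2) = 1 by field_simp] at hlim
  refine hlim.congr fun m => ?_
  rw [← Wallis.W_mul_centralBinom_sq m]
  have := (Wallis.W_pos m).ne'
  have := (centralBinom_pos m).ne'
  simp only [Pi.div_apply]
  field_simp

noncomputable def centralBinomRatio (c : ℝ) (m : ℕ) : ℝ :=
  (centralBinom m : ℝ) ^ 2 * π * m / (16 ^ m * (1 - 1 / (c * m)) ^ 2)

lemma tendsto_centralBinomRatio (c : ℝ) : Tendsto (centralBinomRatio c) atTop (𝓝 1) := by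
  have hcorr : Tendsto (fun m : ℕ => (1 - 1 / (c * m)) ^ 2) atTop (𝓝 1) := by
    have := ((tendsto_inv_atTop_nhds_zero_nat (𝕜 := ℝ)).const_mul c⁻¹).const_sub 1
    simpa [mul_inv, mul_comm] using this.pow 2
  have := tendsto_centralBinom_sq_mul_pi_div.div hcorr one_ne_zero
  rw [div_one] at this
  exact this.congr fun m => div_div _ _ _

lemma one_sub_one_div_mul_pos {c x : ℝ} (hc : 1 < c) (hx : 1 ≤ x) : 0 < 1 - 1 / (c * x) := by
  rw [sub_pos, div_lt_one (by positivity)]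
  nlinarith

section

variable {c : ℝ} {m : ℕ}

lemma centralBinomRatio_pos (hc : 1 < c) (hm : 0 < m) : 0 < centralBinomRatio c m := by
  have hx : (1 : ℝ) ≤ m := one_le_cast.2 hm
  have := one_sub_one_div_mul_pos hc hx
  unfold centralBinomRatio
  have : (0 : ℝ) < centralBinom m := cast_pos.2 (centralBinom_pos m)
  positivity

lemma centralBinomRatio_succ (hc : 1 < c) (hm : 0 < m) :
    centralBinomRatio c (m + 1) = centralBinomRatio c m *
      ((2 * m + 1) ^ 2 * (m + 1) * (c * m - 1) ^ 2 / (4 * m ^ 3 * (c * (m + 1) - 1) ^ 2)) := by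
  have hrec : ((m : ℝ) + 1) * centralBinom (m + 1) = 2 * (2 * m + 1) * centralBinom m := by
    exact_mod_cast succ_mul_centralBinom_succ m
  have hm1 : (1 : ℝ) ≤ m := one_le_cast.2 hm
  have h1 : (m : ℝ) * c - 1 ≠ 0 := by nlinarith
  have h2 : ((m : ℝ) + 1) * c - 1 ≠ 0 := by nlinarith
  have hcorr (x : ℝ) (hx : 0 < x) : 1 - 1 / (c * x) = (c * x - 1) / (c * x) := by
    field_simp
  have hC : (centralBinom (m + 1) : ℝ) = 2 * (2 * m + 1) * centralBinom m / (m + 1) := by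
    rw [← hrec]; field_simp
  unfold centralBinomRatio
  rw [hC]
  push_cast
  rw [hcorr m (by positivity), hcorr (m + 1) (by positivity)]
  field_simp
  ring

lemma centralBinomRatio_eight_succ_lt (hm : 0 < m) :
    centralBinomRatio 8 (m + 1) < centralBinomRatio 8 m := by
  have hx : (1 : ℝ) ≤ m := one_le_cast.2 hm
  rw [centralBinomRatio_succ (by norm_num) hm]
  refine mul_lt_of_lt_one_right (centralBinomRatio_pos (by norm_num) hm) ?_
  rw [div_lt_one (mul_pos (by positivity) (pow_pos (by linarith) 2))]
  nlinarith

lemma centralBinomRatio_nine_lt_succ (hm : 2 ≤ m) :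
    centralBinomRatio 9 m < centralBinomRatio 9 (m + 1) := by
  have hx : (2 : ℝ) ≤ m := by exact_mod_cast hm
  rw [centralBinomRatio_succ (by norm_num) (by omega)]
  refine lt_mul_of_one_lt_right (centralBinomRatio_pos (by norm_num) (by omega)) ?_
  rw [one_lt_div (mul_pos (by positivity) (pow_pos (by linarith) 2))]
  nlinarith

lemma one_lt_centralBinomRatio_eight (hm : 0 < m) : 1 < centralBinomRatio 8 m := by
  obtain ⟨k, rfl⟩ := exists_eq_add_one_of_ne_zero hm.ne'
  have hanti : StrictAnti fun k => centralBinomRatio 8 (k + 1) :=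
    strictAnti_nat_of_succ_lt fun k => centralBinomRatio_eight_succ_lt k.succ_pos
  have hlim := (tendsto_add_atTop_iff_nat 1).2 (tendsto_centralBinomRatio 8)
  exact (hanti.antitone.le_of_tendsto hlim (k + 1)).trans_lt (hanti k.lt_succ_self)

lemma centralBinomRatio_nine_lt_one (hm : 0 < m) : centralBinomRatio 9 m < 1 := by
  match m, hm with
  | 1, _ =>
    norm_num [centralBinomRatio, centralBinom]
    linarith [pi_lt_d2]
  | k + 2, _ =>
    have hmono : StrictMono fun k => centralBinomRatio 9 (k + 2) :=
      strictMono_nat_of_lt_succ fun k => centralBinomRatio_nine_lt_succ (by omega)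
    have hlim := (tendsto_add_atTop_iff_nat 2).2 (tendsto_centralBinomRatio 9)
    exact (hmono k.lt_succ_self).trans_le (hmono.monotone.ge_of_tendsto hlim (k + 1))

lemma centralBinomRatio_eq_sq (hc : 1 < c) (hm : 0 < m) :
    centralBinomRatio c m =
      (centralBinom m / (4 ^ m / √(π * m) * (1 - 1 / (c * m)))) ^ 2 := by
  have := one_sub_one_div_mul_pos hc (one_le_cast.2 hm)
  rw [div_pow, mul_pow, div_pow, sq_sqrt (by positivity), ← pow_mul, pow_mul']
  unfold centralBinomRatio
  field_simp
  norm_num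

lemma lt_centralBinom_iff (hc : 1 < c) (hm : 0 < m) :
    4 ^ m / √(π * m) * (1 - 1 / (c * m)) < centralBinom m ↔ 1 < centralBinomRatio c m := by
  have := one_sub_one_div_mul_pos hc (one_le_cast.2 hm)
  rw [centralBinomRatio_eq_sq hc hm, one_lt_sq_iff₀ (by positivity), one_lt_div (by positivity)]

lemma centralBinom_lt_iff (hc : 1 < c) (hm : 0 < m) :
    centralBinom m < 4 ^ m / √(π * m) * (1 - 1 / (c * m)) ↔ centralBinomRatio c m < 1 := by
  have := one_sub_one_div_mul_pos hc (one_le_cast.2 hm)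
  rw [centralBinomRatio_eq_sq hc hm, sq_lt_one_iff₀ (by positivity), div_lt_one (by positivity)]

end

theorem stmt_8 (m : ℕ) (hm : 1 ≤ m) :
    (4 ^ m / Real.sqrt (π * m)) * (1 - 1 / (8 * (m : ℝ)))
        < ((2 * m).choose m : ℝ) ∧
      ((2 * m).choose m : ℝ)
        < (4 ^ m / Real.sqrt (π * m)) * (1 - 1 / (9 * (m : ℝ))) := by
  rw [← centralBinom_eq_two_mul_choose]
  exact ⟨(lt_centralBinom_iff (by norm_num) hm).2 (one_lt_centralBinomRatio_eight hm),
    (centralBinom_lt_iff (by norm_num) hm).2 (centralBinomRatio_nine_lt_one hm)⟩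
end

section
/- Let d ≥ 1, m ≥ 1, and let Z = (Z_1, …, Z_d) be a measurable random vector with Z_l ≥ 0 almost surely, such that for every t ∈ [0,∞)^d with ∑_{l=1}^d t_l ≤ 1 one has P(∀ l, Z_l > t_l) ≥ (1 − ∑_{l=1}^d t_l)^{m−1}. Then E[∏_{l=1}^d Z_l] ≥ (m−1)! / (m+d−1)!, where the expectation is interpreted in [0,∞]. -/
/-!
Write `∏ l, Z l` as the Lebesgue measure of the box `∏ l, [0, Z l)` and swap the order of
integration (Tonelli): `E[∏ l, Z l] = ∫_{u ≥ 0} P(∀ l, u l < Z l) du`. Restricting to the simplex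
`{u ≥ 0, ∑ u ≤ 1}` and using the tail bound leaves `∫_{simplex} (1 - ∑ u)^(m-1) du`, which an
induction on the dimension (peeling off one coordinate at a time) evaluates to
`(m-1)! / (m+d-1)!`.
-/

open MeasureTheory
open scoped ENNReal

theorem lintegral_pi_fin_succ_eq_lintegral_cons {α : Type*} [MeasureSpace α]
    [SigmaFinite (volume : Measure α)] {d : ℕ} {f : (Fin (d + 1) → α) → ℝ≥0∞}
    (hf : Measurable f) :
    ∫⁻ t, f t = ∫⁻ x, ∫⁻ u, f (Fin.cons x u) := by
  rw [← (volume_preserving_piFinSuccAbove (fun _ => α) 0).symm.lintegral_comp hf,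
    Measure.volume_eq_prod]
  refine (lintegral_prod _ (hf.comp (MeasurableEquiv.measurable _)).aemeasurable).trans ?_
  simp [Fin.insertNthEquiv]

theorem lintegral_Icc_sub_pow {s : ℝ} (hs : 0 ≤ s) (n : ℕ) :
    ∫⁻ x in Set.Icc 0 s, ENNReal.ofReal ((s - x) ^ n) =
      ENNReal.ofReal (s ^ (n + 1) / (n + 1)) := by
  rw [← ofReal_integral_eq_lintegral_ofReal]
  · rw [integral_Icc_eq_integral_Ioc, ← intervalIntegral.integral_of_le hs,
      intervalIntegral.integral_comp_sub_left (fun y => y ^ n) s]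
    simp
  · exact ((continuous_const.sub continuous_id).pow _).integrableOn_Icc
  · filter_upwards [ae_restrict_mem measurableSet_Icc] with x hx
    exact pow_nonneg (sub_nonneg.2 hx.2) n

def simplexBelow (d : ℕ) (s : ℝ) : Set (Fin d → ℝ) := {t | (∀ l, 0 ≤ t l) ∧ ∑ l, t l ≤ s}

theorem measurableSet_simplexBelow (d : ℕ) (s : ℝ) : MeasurableSet (simplexBelow d s) := by
  simp only [simplexBelow, Set.ofPred_and, Set.ofPred_forall]
  exact (MeasurableSet.iInter fun l => measurableSet_le measurable_const (by fun_prop)).inter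
    (measurableSet_le (by fun_prop) measurable_const)

theorem cons_mem_simplexBelow_iff {d : ℕ} {s x : ℝ} {u : Fin d → ℝ} :
    (Fin.cons x u : Fin (d + 1) → ℝ) ∈ simplexBelow (d + 1) s ↔
      0 ≤ x ∧ u ∈ simplexBelow d (s - x) := by
  simp only [simplexBelow, Set.mem_ofPred_eq, Fin.forall_fin_succ, Fin.cons_zero, Fin.cons_succ,
    Fin.sum_cons, le_sub_iff_add_le', and_assoc]

theorem simplexBelow_eq_empty {d : ℕ} {s : ℝ} (hs : s < 0) : simplexBelow d s = ∅ :=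
  Set.eq_empty_of_forall_notMem fun _ ht =>
    (Finset.sum_nonneg fun l _ => ht.1 l).not_gt (ht.2.trans_lt hs)

open Nat in
theorem lintegral_simplexBelow_pow (k d : ℕ) {s : ℝ} (hs : 0 ≤ s) :
    ∫⁻ t in simplexBelow d s, ENNReal.ofReal ((s - ∑ l, t l) ^ k) =
      ENNReal.ofReal (s ^ (k + d) * (k ! / (k + d)! : ℝ)) := by
  induction d generalizing s with
  | zero =>
    have : simplexBelow 0 s = Set.univ := by simp [simplexBelow, hs]
    simp [this, lintegral_unique, volume_pi, Measure.pi_empty_univ, (factorial_pos k).ne']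
  | succ d ih =>
    set c : ℝ := k ! / (k + d)!
    have inner (x : ℝ) : ∫⁻ u, (simplexBelow (d + 1) s).indicator
        (fun t => ENNReal.ofReal ((s - ∑ l, t l) ^ k)) (Fin.cons x u) =
        (Set.Icc 0 s).indicator (fun x => ENNReal.ofReal ((s - x) ^ (k + d) * c)) x := by
      by_cases hx : 0 ≤ x
      · have slice (u : Fin d → ℝ) : (simplexBelow (d + 1) s).indicator
            (fun t => ENNReal.ofReal ((s - ∑ l, t l) ^ k)) (Fin.cons x u) =
            (simplexBelow d (s - x)).indicator
              (fun u => ENNReal.ofReal ((s - x - ∑ l, u l) ^ k)) u := by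
          classical
          simp only [Set.indicator_apply, cons_mem_simplexBelow_iff, hx, true_and, Fin.sum_cons,
            sub_sub]
        rw [lintegral_congr slice, lintegral_indicator (measurableSet_simplexBelow _ _)]
        rcases le_or_gt x s with hxs | hxs
        · rw [ih (sub_nonneg.2 hxs), Set.indicator_of_mem (Set.mem_Icc.2 ⟨hx, hxs⟩)]
        · simp [simplexBelow_eq_empty (sub_neg.2 hxs), hxs.not_ge]
      · simp [cons_mem_simplexBelow_iff, hx]
    rw [← lintegral_indicator (measurableSet_simplexBelow _ _),
      lintegral_pi_fin_succ_eq_lintegral_cons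
        (Measurable.indicator (by fun_prop) (measurableSet_simplexBelow _ _)), lintegral_congr inner,
      lintegral_indicator measurableSet_Icc]
    simp_rw [ENNReal.ofReal_mul' (by positivity : 0 ≤ c)]
    rw [lintegral_mul_const' _ _ ENNReal.ofReal_ne_top, lintegral_Icc_sub_pow hs,
      ← ENNReal.ofReal_mul (by positivity)]
    congr 1
    rw [← add_assoc, factorial_succ]
    push_cast
    simp only [c]
    field_simp

theorem lintegral_prod_ofReal_eq_setLIntegral_meas_lt {Ω ι : Type*} [MeasurableSpace Ω]
    [Fintype ι] (P : Measure Ω) [SFinite P] {Z : Ω → ι → ℝ} (hZ : Measurable Z) :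
    ∫⁻ ω, ∏ l, ENNReal.ofReal (Z ω l) ∂P =
      ∫⁻ u in Set.Ici (0 : ι → ℝ), P {ω | ∀ l, u l < Z ω l} := by
  set A : Set (Ω × (ι → ℝ)) := {p | 0 ≤ p.2} ∩ ⋂ l, {p | p.2 l < Z p.1 l}
  have hA : MeasurableSet A :=
    (measurableSet_le measurable_const measurable_snd).inter <|
      .iInter fun l => measurableSet_lt (by fun_prop) (by fun_prop)
  have slice (ω : Ω) : Prod.mk ω ⁻¹' A = Set.univ.pi fun l => Set.Ico 0 (Z ω l) := by
    ext u
    simp [A, Pi.le_def, forall_and]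
  calc ∫⁻ ω, ∏ l, ENNReal.ofReal (Z ω l) ∂P
      = ∫⁻ ω, volume (Prod.mk ω ⁻¹' A) ∂P := by
        simp_rw [slice, volume_pi_pi, Real.volume_Ico, sub_zero]
    _ = P.prod volume A := (Measure.prod_apply hA).symm
    _ = ∫⁻ u, P ((fun ω => (ω, u)) ⁻¹' A) := Measure.prod_apply_symm hA
    _ = ∫⁻ u in Set.Ici (0 : ι → ℝ), P {ω | ∀ l, u l < Z ω l} := by
        rw [← lintegral_indicator measurableSet_Ici]
        refine lintegral_congr fun u => ?_
        by_cases hu : 0 ≤ u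
        · rw [Set.indicator_of_mem (Set.mem_Ici.2 hu)]
          congr with ω
          simp [A, hu]
        · simp [A, hu]

theorem stmt_11_general {Ω : Type*} [MeasurableSpace Ω] (P : Measure Ω) [IsProbabilityMeasure P]
    (d m : ℕ) (hm : 1 ≤ m) (Z : Ω → Fin d → ℝ)
    (hZmeas : Measurable Z)
    (htail : ∀ t : Fin d → ℝ, (∀ l, 0 ≤ t l) → ∑ l, t l ≤ 1 →
      ENNReal.ofReal ((1 - ∑ l, t l) ^ (m - 1)) ≤ P {ω | ∀ l, t l < Z ω l}) :
    ENNReal.ofReal ((Nat.factorial (m - 1) : ℝ) / (Nat.factorial (m + d - 1) : ℝ))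
      ≤ ∫⁻ ω, ∏ l, ENNReal.ofReal (Z ω l) ∂P := by
  have hconst : ((m - 1).factorial : ℝ) / (m + d - 1).factorial =
      1 ^ (m - 1 + d) * ((m - 1).factorial / (m - 1 + d).factorial) := by
    rw [one_pow, one_mul, show m + d - 1 = m - 1 + d by omega]
  rw [hconst, ← lintegral_simplexBelow_pow (m - 1) d zero_le_one,
    lintegral_prod_ofReal_eq_setLIntegral_meas_lt P hZmeas]
  calc ∫⁻ t in simplexBelow d 1, ENNReal.ofReal ((1 - ∑ l, t l) ^ (m - 1))
      ≤ ∫⁻ t in simplexBelow d 1, P {ω | ∀ l, t l < Z ω l} :=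
        setLIntegral_mono' (measurableSet_simplexBelow d 1) fun t ht => htail t ht.1 ht.2
    _ ≤ ∫⁻ t in Set.Ici (0 : Fin d → ℝ), P {ω | ∀ l, t l < Z ω l} :=
        lintegral_mono_set fun t ht => ht.1

theorem stmt_11 {Ω : Type*} [MeasurableSpace Ω] (P : Measure Ω) [IsProbabilityMeasure P]
    (d m : ℕ) (hd : 1 ≤ d) (hm : 1 ≤ m) (Z : Ω → Fin d → ℝ)
    (hZmeas : Measurable Z)
    (hZnn : ∀ l, ∀ᵐ ω ∂P, 0 ≤ Z ω l)
    (htail : ∀ t : Fin d → ℝ, (∀ l, 0 ≤ t l) → ∑ l, t l ≤ 1 →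
      ENNReal.ofReal ((1 - ∑ l, t l) ^ (m - 1)) ≤ P {ω | ∀ l, t l < Z ω l}) :
    ENNReal.ofReal ((Nat.factorial (m - 1) : ℝ) / (Nat.factorial (m + d - 1) : ℝ))
      ≤ ∫⁻ ω, ∏ l, ENNReal.ofReal (Z ω l) ∂P :=
  stmt_11_general P d m hm Z hZmeas htail
end

section
/- Let d ≥ 1 and λ > 0, and let Z = (Z_1, …, Z_d) be a measurable random vector with Z_l ≥ 0 almost surely, such that for every t ∈ [0,∞)^d one has P(∀ l, Z_l > t_l) ≤ exp(−λ · max_{l} t_l). Then E[∏_{l=1}^d Z_l] ≤ d! / λ^d, where the expectation is interpreted in [0,∞]. -/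
open MeasureTheory ProbabilityTheory Set

/-!
Writing `∏ l, Z l` as the Lebesgue measure of the box `∏ l, (0, Z l)` and applying Tonelli gives
`E[∏ l, Z l] = ∫ P(0 < t < Z) dt`. The tail hypothesis bounds the integrand by
`exp (-λ max t) = P(max t < X)` for `X` exponential with rate `λ`, which is the same integrand
for the vector `(X, …, X)`; running the identity backwards for that vector turns the bound into
`E[X ^ d] = d! / λ ^ d`, the `d`-th moment of `X` (a rescaled Gamma(d + 1, λ) total mass).
-/

theorem lintegral_prod_ofReal_eq_lintegral_measure_box {Ω ι : Type*} [MeasurableSpace Ω]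
    [Fintype ι] (μ : Measure Ω) [SFinite μ] {Z : Ω → ι → ℝ} (hZ : Measurable Z) :
    ∫⁻ ω, ∏ l, ENNReal.ofReal (Z ω l) ∂μ =
      ∫⁻ t : ι → ℝ, μ {ω | ∀ l, t l ∈ Ioo 0 (Z ω l)} := by
  set A : Set (Ω × (ι → ℝ)) := {p | ∀ l, p.2 l ∈ Ioo 0 (Z p.1 l)}
  have hA : MeasurableSet A := by
    simp only [A, ofPred_forall, mem_Ioo, ofPred_and]
    exact .iInter fun l => (measurableSet_lt measurable_const measurable_snd.eval).inter
      (measurableSet_lt measurable_snd.eval (hZ.comp measurable_fst).eval)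
  calc ∫⁻ ω, ∏ l, ENNReal.ofReal (Z ω l) ∂μ
      = ∫⁻ ω, volume (Prod.mk ω ⁻¹' A) ∂μ := by
        refine lintegral_congr fun ω => ?_
        have : Prod.mk ω ⁻¹' A = univ.pi fun l => Ioo 0 (Z ω l) := by ext; simp [A]
        simp [this, Real.volume_pi_Ioo]
    _ = μ.prod volume A := (Measure.prod_apply hA).symm
    _ = ∫⁻ t : ι → ℝ, μ {ω | ∀ l, t l ∈ Ioo 0 (Z ω l)} := Measure.prod_apply_symm hA

theorem expMeasure_Ioi {r x : ℝ} (hr : 0 < r) (hx : 0 ≤ x) :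
    expMeasure r (Ioi x) = ENNReal.ofReal (Real.exp (-(r * x))) := by
  have := isProbabilityMeasure_expMeasure hr
  rw [← compl_Iic, prob_compl_eq_one_sub measurableSet_Iic, ← ofReal_cdf,
    cdf_expMeasure_eq hr, if_pos hx, ← ENNReal.ofReal_one,
    ← ENNReal.ofReal_sub _ (sub_nonneg.2 (Real.exp_le_one_iff.2 (by nlinarith))), sub_sub_cancel]

theorem lintegral_pow_expMeasure {r : ℝ} (hr : 0 < r) (n : ℕ) :
    ∫⁻ x, ENNReal.ofReal x ^ n ∂expMeasure r = ENNReal.ofReal (n.factorial / r ^ n) := by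
  have hdens : ∀ x, exponentialPDF r x * ENNReal.ofReal x ^ n
      = ENNReal.ofReal (n.factorial / r ^ n) * gammaPDF (n + 1) r x := by
    intro x
    rcases lt_or_ge x 0 with hx | hx
    · simp [exponentialPDF_of_neg hx, gammaPDF_of_neg hx]
    rw [exponentialPDF_of_nonneg hx, gammaPDF_of_nonneg hx, ← ENNReal.ofReal_pow hx,
      ← ENNReal.ofReal_mul (by positivity), ← ENNReal.ofReal_mul (by positivity)]
    congr 1
    rw [add_sub_cancel_right, Real.rpow_natCast, Real.Gamma_nat_eq_factorial,
      ← Nat.cast_add_one, Real.rpow_natCast]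
    field_simp
    ring
  rw [expMeasure, gammaMeasure, lintegral_withDensity_eq_lintegral_mul _
    (f := gammaPDF 1 r) (measurable_gammaPDFReal 1 r).ennreal_ofReal (by fun_prop)]
  simp only [Pi.mul_apply]
  change ∫⁻ x, exponentialPDF r x * ENNReal.ofReal x ^ n = _
  simp only [hdens]
  rw [lintegral_const_mul' _ _ ENNReal.ofReal_ne_top,
    lintegral_gammaPDF_eq_one (by positivity) hr, mul_one]

theorem measure_box_le_expMeasure_box {Ω ι : Type*} [MeasurableSpace Ω] [Fintype ι]
    (μ : Measure Ω) {r : ℝ} (hr : 0 < r) {Z : Ω → ι → ℝ}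
    (hι : (Finset.univ : Finset ι).Nonempty)
    (htail : ∀ t : ι → ℝ, (∀ l, 0 ≤ t l) →
      μ {ω | ∀ l, t l < Z ω l} ≤ ENNReal.ofReal (Real.exp (-r * Finset.univ.sup' hι t)))
    (t : ι → ℝ) :
    μ {ω | ∀ l, t l ∈ Ioo 0 (Z ω l)} ≤ expMeasure r {x | ∀ l, t l ∈ Ioo 0 x} := by
  by_cases ht : ∀ l, 0 < t l
  · have hbox : {x | ∀ l, t l ∈ Ioo 0 x} = Ioi (Finset.univ.sup' hι t) := by
      ext x; simp [ht, Finset.sup'_lt_iff]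
    have hsup : 0 ≤ Finset.univ.sup' hι t :=
      (ht hι.choose).le.trans (Finset.le_sup' t hι.choose_spec)
    rw [hbox, expMeasure_Ioi hr hsup, ← neg_mul]
    exact (measure_mono fun ω hω l => (hω l).2).trans (htail t fun l => (ht l).le)
  · obtain ⟨l, hl⟩ := not_forall.1 ht
    have hempty : {ω | ∀ l, t l ∈ Ioo 0 (Z ω l)} = ∅ :=
      eq_empty_of_forall_notMem fun ω hω => hl (hω l).1
    rw [hempty, measure_empty]
    exact zero_le

theorem stmt_12_general {Ω : Type*} [MeasurableSpace Ω] (P : Measure Ω) [IsProbabilityMeasure P]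
    (d : ℕ) (hd : 1 ≤ d) (lam : ℝ) (hlam : 0 < lam) (Z : Ω → Fin d → ℝ)
    (hZmeas : Measurable Z)
    (htail : ∀ t : Fin d → ℝ, (∀ l, 0 ≤ t l) →
      P {ω | ∀ l, t l < Z ω l}
        ≤ ENNReal.ofReal
            (Real.exp (-lam * Finset.univ.sup' ⟨⟨0, hd⟩, Finset.mem_univ _⟩ t))) :
    ∫⁻ ω, ∏ l, ENNReal.ofReal (Z ω l) ∂P
      ≤ ENNReal.ofReal ((Nat.factorial d : ℝ) / lam ^ d) := by
  have := isProbabilityMeasure_expMeasure hlam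
  calc ∫⁻ ω, ∏ l, ENNReal.ofReal (Z ω l) ∂P
      = ∫⁻ t : Fin d → ℝ, P {ω | ∀ l, t l ∈ Ioo 0 (Z ω l)} :=
        lintegral_prod_ofReal_eq_lintegral_measure_box P hZmeas
    _ ≤ ∫⁻ t : Fin d → ℝ, expMeasure lam {x | ∀ l, t l ∈ Ioo 0 x} :=
        lintegral_mono (measure_box_le_expMeasure_box P hlam _ htail)
    _ = ∫⁻ x, ∏ _l : Fin d, ENNReal.ofReal x ∂expMeasure lam :=
        (lintegral_prod_ofReal_eq_lintegral_measure_box _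
          (measurable_pi_lambda _ fun _ => measurable_id)).symm
    _ = ENNReal.ofReal ((Nat.factorial d : ℝ) / lam ^ d) := by
        simp only [Finset.prod_const, Finset.card_univ, Fintype.card_fin,
          lintegral_pow_expMeasure hlam]

theorem stmt_12 {Ω : Type*} [MeasurableSpace Ω] (P : Measure Ω) [IsProbabilityMeasure P]
    (d : ℕ) (hd : 1 ≤ d) (lam : ℝ) (hlam : 0 < lam) (Z : Ω → Fin d → ℝ)
    (hZmeas : Measurable Z)
    (hZnn : ∀ l, ∀ᵐ ω ∂P, 0 ≤ Z ω l)
    (htail : ∀ t : Fin d → ℝ, (∀ l, 0 ≤ t l) →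
      P {ω | ∀ l, t l < Z ω l}
        ≤ ENNReal.ofReal
            (Real.exp (-lam * Finset.univ.sup' ⟨⟨0, hd⟩, Finset.mem_univ _⟩ t))) :
    ∫⁻ ω, ∏ l, ENNReal.ofReal (Z ω l) ∂P
      ≤ ENNReal.ofReal ((Nat.factorial d : ℝ) / lam ^ d) :=
  stmt_12_general P d hd lam hlam Z hZmeas htail
end
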